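/- Let V be a finite-dimensional real vector space, σ ⊆ V a convex cone with nonempty topological interior, and φ ∈ V* a linear functional such that there exist e₊, e₋ ∈ σ with φ(e₊) > 0 and φ(e₋) < 0. Then (σ ∩ ker φ) − (σ ∩ ker φ) = ker φ; that is, the differences of elements of σ ∩ ker φ fill up the whole hyperplane ker φ. -/

import Mathlib

/-- Let `V` be a finite-dimensional real vector space, `σ ⊆ V` a convex cone with
nonempty topological interior, and `φ ∈ V*` a linear functional such that there exist
`e₊, e₋ ∈ σ` with `φ(e₊) > 0` and `φ(e₋) < 0`. Then
`(σ ∩ ker φ) - (σ ∩ ker φ) = ker φ`. -/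
theorem stmt_15 {V : Type*} [NormedAddCommGroup V] [NormedSpace ℝ V]
    [FiniteDimensional ℝ V]
    (σ : Set V) (hσconv : Convex ℝ σ)
    (hσcone : ∀ c : ℝ, 0 ≤ c → ∀ x ∈ σ, c • x ∈ σ)
    (hint : (interior σ).Nonempty)
    (φ : Module.Dual ℝ V) (ep em : V) (hep : ep ∈ σ) (hem : em ∈ σ)
    (hφp : 0 < φ ep) (hφm : φ em < 0) :
    {z | ∃ x ∈ σ ∩ {v | φ v = 0}, ∃ y ∈ σ ∩ {v | φ v = 0}, z = x - y} =
      {v | φ v = 0} := by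
  have hadd : ∀ x ∈ σ, ∀ y ∈ σ, x + y ∈ σ := by
    intro x hx y hy
    have h2 : (2 : ℝ) • ((1/2 : ℝ) • x + (1/2 : ℝ) • y) ∈ σ := by
      apply hσcone 2 (by norm_num)
      exact hσconv hx hy (by norm_num) (by norm_num) (by norm_num)
    simpa [smul_smul, smul_add] using h2
  ext v
  constructor
  · rintro ⟨x, ⟨hx, hxφ⟩, y, ⟨hy, hyφ⟩, rfl⟩
    simp only [Set.mem_setOf_eq] at hxφ hyφ ⊢
    simp [map_sub, hxφ, hyφ]
  · intro hv
    simp only [Set.mem_setOf_eq] at hv ⊢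
    obtain ⟨u, hu⟩ := hint
    -- find small ε > 0 with u + ε • v ∈ σ
    obtain ⟨δ, hδ, hball⟩ := Metric.mem_nhds_iff.mp (mem_interior_iff_mem_nhds.mp hu)
    set ε : ℝ := δ / (2 * (‖v‖ + 1)) with hεdef
    have hvpos : (0:ℝ) < ‖v‖ + 1 := by positivity
    have hε : 0 < ε := by positivity
    have hmem : u + ε • v ∈ σ := by
      apply hball
      rw [Metric.mem_ball, dist_eq_norm]
      have : u + ε • v - u = ε • v := by abel
      rw [this, norm_smul, Real.norm_eq_abs, abs_of_pos hε]
      have h1 : ε * ‖v‖ < ε * (‖v‖ + 1) := by nlinarith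
      have h2 : ε * (‖v‖ + 1) = δ / 2 := by
        field_simp [hεdef]
        have h3 : ε * (2 * (‖v‖ + 1)) = δ := by
          rw [hεdef]; exact div_mul_cancel₀ _ (by positivity)
        linarith
      linarith
    have huσ : u ∈ σ := interior_subset hu
    -- find w ∈ σ with φ w = -φ u
    obtain ⟨w, hwσ, hwφ⟩ : ∃ w ∈ σ, φ w = -φ u := by
      rcases lt_trichotomy (φ u) 0 with h | h | h
      · refine ⟨((-φ u) / φ ep) • ep,
          hσcone _ (le_of_lt (div_pos (by linarith) hφp)) _ hep, ?_⟩
        simp only [map_smul, smul_eq_mul]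
        field_simp
      · refine ⟨(0:ℝ) • ep, hσcone 0 le_rfl _ hep, by simp [h]⟩
      · refine ⟨((φ u) / (-φ em)) • em,
          hσcone _ (le_of_lt (div_pos h (by linarith))) _ hem, ?_⟩
        simp only [map_smul, smul_eq_mul]
        have hne : φ em ≠ 0 := ne_of_lt hφm
        rw [div_mul_eq_mul_div, mul_div_assoc, div_neg, div_self hne]
        ring
    refine ⟨ε⁻¹ • (u + ε • v + w), ⟨hσcone _ (by positivity) _ (hadd _ hmem _ hwσ), ?_⟩,
      ε⁻¹ • (u + w), ⟨hσcone _ (by positivity) _ (hadd _ huσ _ hwσ), ?_⟩, ?_⟩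
    · simp [map_smul, map_add, hwφ, hv]
    · simp [map_smul, map_add, hwφ]
    · rw [← smul_sub]
      have : u + ε • v + w - (u + w) = ε • v := by abel
      rw [this, smul_smul, inv_mul_cancel₀ (ne_of_gt hε), one_smul]
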